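/- Let p be a prime and n ≥ 1, let B be the group of invertible upper triangular matrices in GL_n(ℚ_p), and let J be the Iwahori subgroup. If π and π′ are permutation matrices such that the double cosets B·π·J and B·π′·J intersect — i.e., b·π·j = b′·π′·j′ for some b, b′ ∈ B and j, j′ ∈ J — then π = π′. Consequently, the double cosets B·π·J for distinct permutation matrices π are pairwise disjoint in GL_n(ℚ_p). -/

import Mathlib

/-- The permutation matrix of `π ∈ S_n` (over `ℚ_p`): the 0-1 matrix whose column `j`
has its `1` in row `π j`. -/
noncomputable def permMat (p : ℕ) [Fact p.Prime] (n : ℕ) (π : Equiv.Perm (Fin n)) :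
    Matrix (Fin n) (Fin n) ℚ_[p] :=
  fun i j => if π j = i then 1 else 0

/-- The (opposite) Iwahori subgroup of `GL_n(ℚ_p)`: matrices with entries in `ℤ_p`,
determinant a unit of `ℤ_p`, whose reduction mod `p` is lower triangular (i.e. the
entries strictly above the diagonal lie in `pℤ_p`). -/
def Iwahori (p : ℕ) [Fact p.Prime] (n : ℕ) : Set (Matrix (Fin n) (Fin n) ℚ_[p]) :=
  {g | (∀ i j, ‖g i j‖ ≤ 1) ∧ ‖g.det‖ = 1 ∧ ∀ i j : Fin n, i < j → ‖g i j‖ < 1}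

/-- The group `B` of invertible upper triangular matrices in `GL_n(ℚ_p)`. -/
def UpperBorel (p : ℕ) [Fact p.Prime] (n : ℕ) : Set (Matrix (Fin n) (Fin n) ℚ_[p]) :=
  {b | (∀ i j : Fin n, j < i → b i j = 0) ∧ IsUnit b.det}

open Matrix

section IwahoriAux
variable {p : ℕ} [Fact p.Prime] {n : ℕ}


/-- lift an integral matrix over `ℚ_p` to `ℤ_p`. -/
noncomputable def liftInt (g : Matrix (Fin n) (Fin n) ℚ_[p])
    (h : ∀ i j, ‖g i j‖ ≤ 1) : Matrix (Fin n) (Fin n) ℤ_[p] :=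
  fun i j => ⟨g i j, h i j⟩

lemma liftInt_map (g : Matrix (Fin n) (Fin n) ℚ_[p]) (h : ∀ i j, ‖g i j‖ ≤ 1) :
    (liftInt g h).map (PadicInt.Coe.ringHom) = g := by
  ext i j; rfl

lemma toZMod_eq_zero {x : ℤ_[p]} (h : ‖x‖ < 1) : PadicInt.toZMod x = 0 := by
  have : x ∈ RingHom.ker (PadicInt.toZMod : ℤ_[p] →+* ZMod p) := by
    rw [PadicInt.ker_toZMod]
    exact PadicInt.mem_nonunits.mpr h
  exact this

lemma key {j j' : Matrix (Fin n) (Fin n) ℚ_[p]}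
    (hj : ∀ i k, ‖j i k‖ ≤ 1) (hjd : ‖j.det‖ = 1) (hjt : ∀ i k : Fin n, i < k → ‖j i k‖ < 1)
    (hj' : ∀ i k, ‖j' i k‖ ≤ 1) (hjd' : ‖j'.det‖ = 1) (hjt' : ∀ i k : Fin n, i < k → ‖j' i k‖ < 1)
    {M : Matrix (Fin n) (Fin n) ℚ_[p]} (hM : M * j = j') (i : Fin n) : M i i ≠ 0 := by
  set J := liftInt j hj with hJdef
  set J' := liftInt j' hj' with hJ'def
  have hcJ : J.map (PadicInt.Coe.ringHom) = j := liftInt_map _ _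
  have hcJ' : J'.map (PadicInt.Coe.ringHom) = j' := liftInt_map _ _
  have hdetJ : IsUnit J.det := by
    rw [PadicInt.isUnit_iff, PadicInt.norm_def]
    have := (PadicInt.Coe.ringHom (p := p)).map_det J
    rw [RingHom.mapMatrix_apply, hcJ] at this
    rw [show ((J.det : ℤ_[p]) : ℚ_[p]) = PadicInt.Coe.ringHom J.det from rfl, this, hjd]
  have hdetJ' : IsUnit J'.det := by
    rw [PadicInt.isUnit_iff, PadicInt.norm_def]
    have := (PadicInt.Coe.ringHom (p := p)).map_det J'
    rw [RingHom.mapMatrix_apply, hcJ'] at this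
    rw [show ((J'.det : ℤ_[p]) : ℚ_[p]) = PadicInt.Coe.ringHom J'.det from rfl, this, hjd']
  haveI : Invertible J := J.invertibleOfIsUnitDet hdetJ
  -- M equals the coercion of J' * ⅟J
  have hjinv : j * ((⅟J).map (PadicInt.Coe.ringHom)) = 1 := by
    rw [← hcJ, ← Matrix.map_mul, mul_invOf_self]
    simp
  have hMeq : M = (J' * ⅟J).map (PadicInt.Coe.ringHom) := by
    calc M = M * (j * ((⅟J).map (PadicInt.Coe.ringHom))) := by rw [hjinv, mul_one]
    _ = (M * j) * ((⅟J).map (PadicInt.Coe.ringHom)) := by rw [mul_assoc]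
    _ = (J'.map (PadicInt.Coe.ringHom)) * ((⅟J).map (PadicInt.Coe.ringHom)) := by rw [hM, hcJ']
    _ = (J' * ⅟J).map (PadicInt.Coe.ringHom) := by rw [Matrix.map_mul]
  -- reduce mod p
  set φ := (PadicInt.toZMod : ℤ_[p] →+* ZMod p) with hφ
  set A := J.map φ with hA
  set A' := J'.map φ with hA'
  have hAinv : A * ((⅟J).map φ) = 1 := by
    rw [← Matrix.map_mul, mul_invOf_self]; simp
  have hAinv' : ((⅟J).map φ) * A = 1 := by
    rw [← Matrix.map_mul, invOf_mul_self]; simp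
  haveI : Invertible A := ⟨(⅟J).map φ, hAinv', hAinv⟩
  have htriA : A.BlockTriangular OrderDual.toDual := by
    intro a b hab
    exact toZMod_eq_zero (by simpa [hJdef, liftInt, PadicInt.norm_def] using hjt a b hab)
  have htriA' : A'.BlockTriangular OrderDual.toDual := by
    intro a b hab
    exact toZMod_eq_zero (by simpa [hJ'def, liftInt, PadicInt.norm_def] using hjt' a b hab)
  have htriAinv : (A⁻¹).BlockTriangular OrderDual.toDual :=
    blockTriangular_inv_of_blockTriangular htriA
  have hAinveq : A⁻¹ = (⅟J).map φ := Matrix.inv_eq_right_inv hAinv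
  set R := A' * ((⅟J).map φ) with hR
  have htriR : R.BlockTriangular OrderDual.toDual := by
    rw [hR, ← hAinveq]; exact htriA'.mul htriAinv
  have hRmap : R = (J' * ⅟J).map φ := by rw [hR, Matrix.map_mul]
  have hdetA' : A'.det ≠ 0 := by
    have : IsUnit (φ J'.det) := hdetJ'.map φ
    rw [RingHom.map_det, RingHom.mapMatrix_apply] at this
    exact this.ne_zero
  have hdetR : R.det ≠ 0 := by
    intro h0
    apply hdetA'
    have : (R * A).det = A'.det := by
      rw [hR, mul_assoc, hAinv', mul_one]
    rw [Matrix.det_mul, h0, zero_mul] at this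
    exact this.symm
  have hdetprod : R.det = ∏ k, R k k := Matrix.det_of_lowerTriangular R htriR
  have hRii : R i i ≠ 0 := by
    intro h0
    apply hdetR
    rw [hdetprod]
    exact Finset.prod_eq_zero (Finset.mem_univ i) h0
  -- conclude
  intro h0
  apply hRii
  have hz : (J' * ⅟J) i i = 0 := by
    have h1 := congrArg (fun X => X i i) hMeq
    simp only [Matrix.map_apply] at h1
    rw [h0] at h1
    exact PadicInt.coe_eq_zero.mp h1.symm
  rw [hRmap, Matrix.map_apply, hz, map_zero]


lemma permMat_mul (σ τ : Equiv.Perm (Fin n)) :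
    permMat p n σ * permMat p n τ = permMat p n (σ * τ) := by
  ext i k
  simp [Matrix.mul_apply, permMat, mul_ite, ite_mul, mul_one, mul_zero, zero_mul,
    Finset.sum_ite_eq, Equiv.Perm.mul_apply]
  by_cases h : σ (τ k) = i <;> simp [h]

lemma permMat_one : permMat p n 1 = 1 := by
  ext i k
  simp [permMat, Matrix.one_apply, eq_comm]

lemma half (π π' : Equiv.Perm (Fin n))
    (b b' j j' : Matrix (Fin n) (Fin n) ℚ_[p])
    (hb : b ∈ UpperBorel p n) (hb' : b' ∈ UpperBorel p n)
    (hj : j ∈ Iwahori p n) (hj' : j' ∈ Iwahori p n)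
    (h : b * permMat p n π * j = b' * permMat p n π' * j') (i : Fin n) : π' i ≤ π i := by
  haveI : Invertible b' := b'.invertibleOfIsUnitDet hb'.2
  set u := b'⁻¹ * b with hu
  have hutri : u.BlockTriangular id := by
    have h1 : b'.BlockTriangular id := fun a c h => hb'.1 a c h
    have h2 : b.BlockTriangular id := fun a c h => hb.1 a c h
    exact (blockTriangular_inv_of_blockTriangular h1).mul h2
  have hequ : u * permMat p n π * j = permMat p n π' * j' := by
    calc u * permMat p n π * j = b'⁻¹ * (b * permMat p n π * j) := by
          rw [hu]; rw [mul_assoc, mul_assoc, mul_assoc]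
    _ = b'⁻¹ * (b' * permMat p n π' * j') := by rw [h]
    _ = permMat p n π' * j' := by
          rw [show b' * permMat p n π' * j' = b' * (permMat p n π' * j') from by rw [mul_assoc]]
          exact Matrix.inv_mul_cancel_left_of_invertible _ _
  set M : Matrix (Fin n) (Fin n) ℚ_[p] := fun a k => u (π' a) (π k) with hMdef
  have hPM : permMat p n π' * M = u * permMat p n π := by
    ext a k
    rw [Matrix.mul_apply, Matrix.mul_apply,
      Finset.sum_eq_single (π'.symm a)
        (fun m _ hm => by
          have : π' m ≠ a := fun hc => hm (by rw [← hc, Equiv.symm_apply_apply])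
          simp [permMat, this])
        (fun hmem => absurd (Finset.mem_univ _) hmem),
      Finset.sum_eq_single (π k)
        (fun m _ hm => by simp [permMat, Ne.symm hm])
        (fun hmem => absurd (Finset.mem_univ _) hmem)]
    simp [permMat, hMdef, Equiv.apply_symm_apply]
  have hMj : M * j = j' := by
    have h1 : permMat p n π' * (M * j) = permMat p n π' * j' := by
      rw [← mul_assoc, hPM, hequ]
    have h2 := congrArg (fun X => permMat p n π'⁻¹ * X) h1
    simpa [← mul_assoc, permMat_mul, permMat_one] using h2
  have hne := key hj.1 hj.2.1 hj.2.2 hj'.1 hj'.2.1 hj'.2.2 hMj i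
  by_contra hlt
  push_neg at hlt
  exact hne (hutri hlt)

end IwahoriAux

/-- If the double cosets `B·π·J` and `B·π′·J` intersect, i.e. `b·π·j = b′·π′·j′` for
some `b, b′ ∈ B` and `j, j′ ∈ J`, then `π = π′`; consequently the double cosets
`B·π·J` for distinct permutation matrices are pairwise disjoint in `GL_n(ℚ_p)`. -/
theorem iwahori_double_cosets_pairwise_disjoint
    (p : ℕ) [Fact p.Prime] (n : ℕ) (hn : 1 ≤ n)
    (π π' : Equiv.Perm (Fin n)) :
    (∀ b b' j j' : Matrix (Fin n) (Fin n) ℚ_[p],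
      b ∈ UpperBorel p n → b' ∈ UpperBorel p n →
      j ∈ Iwahori p n → j' ∈ Iwahori p n →
      b * permMat p n π * j = b' * permMat p n π' * j' → π = π') ∧
    (π ≠ π' →
      {g : Matrix (Fin n) (Fin n) ℚ_[p] |
          ∃ b ∈ UpperBorel p n, ∃ j ∈ Iwahori p n, g = b * permMat p n π * j} ∩
        {g : Matrix (Fin n) (Fin n) ℚ_[p] |
          ∃ b ∈ UpperBorel p n, ∃ j ∈ Iwahori p n, g = b * permMat p n π' * j}
      = ∅) := by
  have part1 : ∀ b b' j j' : Matrix (Fin n) (Fin n) ℚ_[p],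
      b ∈ UpperBorel p n → b' ∈ UpperBorel p n →
      j ∈ Iwahori p n → j' ∈ Iwahori p n →
      b * permMat p n π * j = b' * permMat p n π' * j' → π = π' := by
    intro b b' j j' hb hb' hj hj' h
    refine Equiv.ext fun i => le_antisymm ?_ ?_
    · exact half π' π b' b j' j hb' hb hj' hj h.symm i
    · exact half π π' b b' j j' hb hb' hj hj' h i
  refine ⟨part1, fun hne => ?_⟩
  rw [Set.eq_empty_iff_forall_notMem]
  rintro g ⟨⟨b, hb, j, hj, hg⟩, ⟨b', hb', j', hj', hg'⟩⟩
  exact hne (part1 b b' j j' hb hb' hj hj' (hg ▸ hg'))
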